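/- For every simple graph G and every closed walk c₁ : I_N → G in G, there exist n ≥ 3 and a closed walk c₂ : I_N' → C_n in the cycle graph C_n (namely n = max(5, 1 + number of non-stationary steps of c₁) and c₂ a padded walk going once around C_n) such that for every graph map f : G → C_n, the closed walks f ∘ c₁ and c₂ are not freely A-homotopic as loops (after padding to a common length). -/

import Mathlib

/-- The path graph `I_N` on vertices `{0, 1, …, N}`, with `i` adjacent to `j` iff `|i - j| = 1`. -/
def pathG (N : ℕ) : SimpleGraph (Fin (N + 1)) where
  Adj i j := (i : ℕ) + 1 = (j : ℕ) ∨ (j : ℕ) + 1 = (i : ℕ)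
  symm := ⟨fun i j h => h.symm⟩
  loopless := ⟨fun i h => by rcases h with h | h <;> omega⟩

/-- The cycle graph `C_n` on vertices `ZMod n`, with `i` adjacent to `j` iff `j = i + 1` or
`j = i - 1` (for `n ≥ 3`). -/
def cycleG (n : ℕ) : SimpleGraph (ZMod n) :=
  SimpleGraph.fromRel (fun i j => j = i + 1)

/-- A graph map `f : G → H`: for adjacent `u v` in `G`, either `f u = f v` or
`f u, f v` are adjacent in `H`. -/
def IsGraphMap {V W : Type*} (G : SimpleGraph V) (H : SimpleGraph W) (f : V → W) : Prop :=
  ∀ ⦃u v⦄, G.Adj u v → f u = f v ∨ H.Adj (f u) (f v)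

/-- Padding a walk `c : I_N → G` to length `N' ≥ N`: the walk `i ↦ c (min i N)`. -/
def padWalk {V : Type*} {N : ℕ} (N' : ℕ) (c : Fin (N + 1) → V) : Fin (N' + 1) → V :=
  fun i => c ⟨min (i : ℕ) N, by omega⟩

/-- Closed walks `c, c' : I_N → G` are freely A-homotopic as loops if there are `k` and a graph
map `α : I_N □ I_k → G` with `α (i, 0) = c i`, `α (i, k) = c' i`, and `α (0, j) = α (N, j)`
for all `j`. -/
def FreeLoopAHomotopic {V : Type*} (G : SimpleGraph V) (N : ℕ) (c c' : Fin (N + 1) → V) : Prop :=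
  ∃ (k : ℕ) (α : Fin (N + 1) × Fin (k + 1) → V),
    IsGraphMap ((pathG N).boxProd (pathG k)) G α ∧
    (∀ i, α (i, 0) = c i) ∧ (∀ i, α (i, Fin.last k) = c' i) ∧
    (∀ j, α (0, j) = α (Fin.last N, j))

section Helpers

def StepRel (n : ℕ) (a b : ZMod n) : Prop := a = b ∨ (cycleG n).Adj a b

noncomputable def deg (n : ℕ) (a b : ZMod n) : ℤ :=
  by classical exact if b = a then 0 else if b = a + 1 then 1 else -1

lemma deg_self (n : ℕ) (a : ZMod n) : deg n a a = 0 := by simp [deg]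

lemma deg_abs (n : ℕ) (a b : ZMod n) : |deg n a b| ≤ 1 := by
  unfold deg; split_ifs <;> simp

lemma zmodTwo_ne_zero {n : ℕ} (hn : 5 ≤ n) : (2 : ZMod n) ≠ 0 := by
  haveI : NeZero n := ⟨by omega⟩
  intro h
  have h2 : ((2:ℕ) : ZMod n) = 0 := by push_cast; exact h
  rw [ZMod.natCast_eq_zero_iff] at h2
  have := Nat.le_of_dvd (by norm_num) h2
  omega

lemma zmodOne_ne_zero {n : ℕ} (hn : 5 ≤ n) : (1 : ZMod n) ≠ 0 := by
  haveI : Fact (1 < n) := ⟨by omega⟩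
  exact one_ne_zero

lemma deg_add_one {n : ℕ} (hn : 5 ≤ n) (a : ZMod n) : deg n a (a + 1) = 1 := by
  unfold deg
  rw [if_neg, if_pos rfl]
  intro h
  exact zmodOne_ne_zero hn (left_eq_add.mp h.symm)

lemma deg_cast {n : ℕ} (hn : 5 ≤ n) {a b : ZMod n} (h : StepRel n a b) :
    ((deg n a b : ℤ) : ZMod n) = b - a := by
  haveI : NeZero n := ⟨by omega⟩
  rcases h with h | h
  · subst h; simp [deg_self]
  · rw [cycleG, SimpleGraph.fromRel_adj] at h
    obtain ⟨hne, h1 | h2⟩ := h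
    · unfold deg
      rw [if_neg (fun hb => hne hb.symm), if_pos h1]
      rw [h1]; push_cast; ring
    · have hne2 : b ≠ a + 1 := by
        intro hb
        apply zmodTwo_ne_zero hn
        have h3 : a = a + 2 := by
          nth_rewrite 1 [h2]
          rw [hb]
          ring
        exact left_eq_add.mp h3
      unfold deg
      rw [if_neg (fun hb => hne hb.symm), if_neg hne2]
      rw [h2]; push_cast; ring

lemma int_eq_zero_of_dvd {x : ℤ} {n : ℕ} (hd : (n:ℤ) ∣ x) (hb : |x| < n) : x = 0 := by
  rcases eq_or_ne x 0 with h | h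
  · exact h
  · have := Int.le_of_dvd (abs_pos.mpr h) ((dvd_abs _ _).mpr hd)
    linarith

lemma deg_square {n : ℕ} (hn : 5 ≤ n) {a b a' b' : ZMod n}
    (hab : StepRel n a b) (haa' : StepRel n a a') (hbb' : StepRel n b b')
    (ha'b' : StepRel n a' b') :
    deg n a b + deg n b b' = deg n a a' + deg n a' b' := by
  haveI : NeZero n := ⟨by omega⟩
  set x : ℤ := deg n a b + deg n b b' - (deg n a a' + deg n a' b') with hx
  have hcast : ((x : ℤ) : ZMod n) = 0 := by
    push_cast [hx]
    rw [deg_cast hn hab, deg_cast hn hbb', deg_cast hn haa', deg_cast hn ha'b']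
    ring
  have hdvd : (n:ℤ) ∣ x := by rwa [ZMod.intCast_zmod_eq_zero_iff_dvd] at hcast
  have h1 := abs_le.mp (deg_abs n a b)
  have h2 := abs_le.mp (deg_abs n b b')
  have h3 := abs_le.mp (deg_abs n a a')
  have h4 := abs_le.mp (deg_abs n a' b')
  have hxb : |x| < n := by
    rw [abs_lt]; omega
  have := int_eq_zero_of_dvd hdvd hxb
  linarith [this]

noncomputable def wind (n K : ℕ) (g : ℕ → ZMod n) : ℤ :=
  ∑ i ∈ Finset.range K, deg n (g i) (g (i+1))

lemma wind_cast {n : ℕ} (hn : 5 ≤ n) (K : ℕ) (g : ℕ → ZMod n)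
    (hs : ∀ i < K, StepRel n (g i) (g (i+1))) :
    ((wind n K g : ℤ) : ZMod n) = g K - g 0 := by
  induction K with
  | zero => simp [wind]
  | succ K ih =>
    rw [wind, Finset.sum_range_succ, Int.cast_add, ← wind,
      ih (fun i hi => hs i (by omega)), deg_cast hn (hs K (by omega))]
    ring

lemma row_eq {n : ℕ} (hn : 5 ≤ n) (K : ℕ) (g g' : ℕ → ZMod n)
    (hsg : ∀ i < K, StepRel n (g i) (g (i+1)))
    (hsg' : ∀ i < K, StepRel n (g' i) (g' (i+1)))
    (hvert : ∀ i ≤ K, StepRel n (g i) (g' i))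
    (h0 : g 0 = g K) (h0' : g' 0 = g' K) :
    wind n K g = wind n K g' := by
  have key : ∀ i ∈ Finset.range K,
      deg n (g i) (g (i+1)) - deg n (g' i) (g' (i+1))
      = deg n (g i) (g' i) - deg n (g (i+1)) (g' (i+1)) := by
    intro i hi
    have hi' := Finset.mem_range.mp hi
    have := deg_square hn (hsg i hi') (hvert i (by omega)) (hvert (i+1) (by omega))
      (hsg' i hi')
    linarith
  have hdiff : wind n K g - wind n K g' = deg n (g 0) (g' 0) - deg n (g K) (g' K) := by
    rw [wind, wind, ← Finset.sum_sub_distrib, Finset.sum_congr rfl key,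
      Finset.sum_range_sub' (fun i => deg n (g i) (g' i))]
  rw [h0, h0'] at hdiff
  linarith

lemma homotopy_wind {n : ℕ} (hn : 5 ≤ n) (K k : ℕ) (α : Fin (K+1) × Fin (k+1) → ZMod n)
    (hα : IsGraphMap ((pathG K).boxProd (pathG k)) (cycleG n) α)
    (hb : ∀ j, α (0, j) = α (Fin.last K, j)) :
    wind n K (fun i => α (⟨min i K, by omega⟩, 0))
      = wind n K (fun i => α (⟨min i K, by omega⟩, Fin.last k)) := by
  set r : Fin (k+1) → ℕ → ZMod n := fun j i => α (⟨min i K, by omega⟩, j) with hr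
  have hstep : ∀ (j : Fin (k+1)), ∀ i < K, StepRel n (r j i) (r j (i+1)) := by
    intro j i hi
    have hpa : (pathG K).Adj ⟨min i K, by omega⟩ ⟨min (i+1) K, by omega⟩ :=
      Or.inl (show min i K + 1 = min (i+1) K by omega)
    have hadj : ((pathG K).boxProd (pathG k)).Adj
        (⟨min i K, by omega⟩, j) (⟨min (i+1) K, by omega⟩, j) := by
      rw [SimpleGraph.boxProd_adj]
      exact Or.inl ⟨hpa, rfl⟩
    exact hα hadj
  have hvert : ∀ (j j' : Fin (k+1)), (j:ℕ) + 1 = (j':ℕ) →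
      ∀ i ≤ K, StepRel n (r j i) (r j' i) := by
    intro j j' hjj i _
    have hpa : (pathG k).Adj j j' := Or.inl hjj
    have hadj : ((pathG K).boxProd (pathG k)).Adj
        (⟨min i K, by omega⟩, j) (⟨min i K, by omega⟩, j') := by
      rw [SimpleGraph.boxProd_adj]
      exact Or.inr ⟨hpa, rfl⟩
    exact hα hadj
  have hcl : ∀ j : Fin (k+1), r j 0 = r j K := by
    intro j
    show α (⟨min 0 K, by omega⟩, j) = α (⟨min K K, by omega⟩, j)
    have e0 : (⟨min 0 K, by omega⟩ : Fin (K+1)) = 0 := by ext; simp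
    have eK : (⟨min K K, by omega⟩ : Fin (K+1)) = Fin.last K := by ext; simp
    rw [e0, eK]
    exact hb j
  have main : ∀ m, ∀ hm : m ≤ k, wind n K (r 0) = wind n K (r ⟨m, by omega⟩) := by
    intro m
    induction m with
    | zero =>
      intro _
      have e0 : (⟨0, by omega⟩ : Fin (k+1)) = 0 := by ext; simp
      rw [e0]
    | succ m ih =>
      intro hm
      rw [ih (by omega)]
      exact row_eq hn K (r ⟨m, by omega⟩) (r ⟨m+1, by omega⟩)
        (hstep _) (hstep _)
        (hvert ⟨m, by omega⟩ ⟨m+1, by omega⟩ rfl)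
        (hcl _) (hcl _)
  have := main k le_rfl
  have ek : (⟨k, by omega⟩ : Fin (k+1)) = Fin.last k := by ext; simp
  rw [ek] at this
  exact this

end Helpers

/-- For every simple graph `G` and closed walk `c₁ : I_N → G`, there exist `n ≥ 3` and a closed
walk `c₂ : I_N' → C_n` such that for every graph map `f : G → C_n`, the loops `f ∘ c₁` and `c₂`
are not freely A-homotopic after padding to a common length. -/
theorem exists_cycle_walk_not_freely_homotopic {V : Type*} (G : SimpleGraph V) (N : ℕ)
    (c₁ : Fin (N + 1) → V) (hc₁ : IsGraphMap (pathG N) G c₁)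
    (hclosed : c₁ 0 = c₁ (Fin.last N)) :
    ∃ (n N' : ℕ), 3 ≤ n ∧
      ∃ c₂ : Fin (N' + 1) → ZMod n,
        IsGraphMap (pathG N') (cycleG n) c₂ ∧ c₂ 0 = c₂ (Fin.last N') ∧
        ∀ f : V → ZMod n, IsGraphMap G (cycleG n) f →
          ∀ K, N ≤ K → N' ≤ K →
            ¬ FreeLoopAHomotopic (cycleG n) K (padWalk K (f ∘ c₁)) (padWalk K c₂) := by
  classical
  set n := max 5 (N+1) with hn_def
  have hn5 : 5 ≤ n := le_max_left _ _
  have hnN : N < n := by omega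
  haveI : NeZero n := ⟨by omega⟩
  refine ⟨n, n, by omega, fun i => ((i : ℕ) : ZMod n), ?_, ?_, ?_⟩
  · -- c₂ is a graph map
    intro u v huv
    right
    rw [cycleG, SimpleGraph.fromRel_adj]
    rcases huv with h | h
    · have hba : ((v:ℕ) : ZMod n) = ((u:ℕ) : ZMod n) + 1 := by
        rw [← h]; push_cast; ring
      refine ⟨?_, Or.inl hba⟩
      intro he
      rw [show ((u:ℕ):ZMod n) = ((v:ℕ):ZMod n) from he] at hba
      exact zmodOne_ne_zero hn5 (left_eq_add.mp hba)
    · have hab : ((u:ℕ) : ZMod n) = ((v:ℕ) : ZMod n) + 1 := by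
        rw [← h]; push_cast; ring
      refine ⟨?_, Or.inr hab⟩
      intro he
      rw [← show ((u:ℕ):ZMod n) = ((v:ℕ):ZMod n) from he] at hab
      exact zmodOne_ne_zero hn5 (left_eq_add.mp hab)
  · -- closed
    simp [Fin.val_last, ZMod.natCast_self]
  · -- main
    intro f hf K hNK hnK hFree
    obtain ⟨k, α, hα, h0, hkk, hbdry⟩ := hFree
    set gA : ℕ → ZMod n := fun i => f (c₁ ⟨min i N, by omega⟩) with hgA
    set gB : ℕ → ZMod n := fun i => ((min i n : ℕ) : ZMod n) with hgB
    have hr0 : (fun i => α (⟨min i K, by omega⟩, 0)) = gA := by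
      funext i
      rw [h0 ⟨min i K, by omega⟩]
      show f (c₁ ⟨min (min i K) N, by omega⟩) = f (c₁ ⟨min i N, by omega⟩)
      have e : (⟨min (min i K) N, by omega⟩ : Fin (N+1)) = ⟨min i N, by omega⟩ := by
        ext; simp; omega
      rw [e]
    have hrk : (fun i => α (⟨min i K, by omega⟩, Fin.last k)) = gB := by
      funext i
      rw [hkk ⟨min i K, by omega⟩]
      show (((⟨min (min i K) n, by omega⟩ : Fin (n+1)) : ℕ) : ZMod n)
        = ((min i n : ℕ) : ZMod n)
      have e : min (min i K) n = min i n := by omega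
      simp [e]
    have hinv := homotopy_wind hn5 K k α hα hbdry
    rw [hr0, hrk] at hinv
    -- steps of gA
    have hsA : ∀ i < K, StepRel n (gA i) (gA (i+1)) := by
      intro i hi
      by_cases hiN : i < N
      · have hpa : (pathG N).Adj ⟨min i N, by omega⟩ ⟨min (i+1) N, by omega⟩ :=
          Or.inl (show min i N + 1 = min (i+1) N by omega)
        rcases hc₁ hpa with he | ha
        · exact Or.inl (congrArg f he)
        · exact hf ha
      · left
        show f (c₁ ⟨min i N, by omega⟩) = f (c₁ ⟨min (i+1) N, by omega⟩)
        have e : (⟨min i N, by omega⟩ : Fin (N+1)) = ⟨min (i+1) N, by omega⟩ := by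
          ext; simp; omega
        rw [e]
    -- gA closed
    have hAcl : gA K = gA 0 := by
      show f (c₁ ⟨min K N, by omega⟩) = f (c₁ ⟨min 0 N, by omega⟩)
      have eK : (⟨min K N, by omega⟩ : Fin (N+1)) = Fin.last N := by
        ext; simp [Fin.val_last]; omega
      have e0 : (⟨min 0 N, by omega⟩ : Fin (N+1)) = 0 := by ext; simp
      rw [eK, e0, hclosed]
    have hdvd : (n:ℤ) ∣ wind n K gA := by
      have := wind_cast hn5 K gA hsA
      rw [hAcl, sub_self] at this
      rwa [ZMod.intCast_zmod_eq_zero_iff_dvd] at this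
    -- bound on wind gA
    have hzeroA : ∀ i ∈ Finset.Ico N K, deg n (gA i) (gA (i+1)) = 0 := by
      intro i hi
      have hiN := (Finset.mem_Ico.mp hi).1
      have e : gA i = gA (i+1) := by
        show f (c₁ ⟨min i N, by omega⟩) = f (c₁ ⟨min (i+1) N, by omega⟩)
        have e' : (⟨min i N, by omega⟩ : Fin (N+1)) = ⟨min (i+1) N, by omega⟩ := by
          ext; simp; omega
        rw [e']
      rw [e, deg_self]
    have hsplitA : wind n K gA = ∑ i ∈ Finset.range N, deg n (gA i) (gA (i+1)) := by
      rw [wind, Finset.range_eq_Ico,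
        ← Finset.sum_Ico_consecutive (fun i => deg n (gA i) (gA (i+1))) (Nat.zero_le N) hNK,
        Finset.sum_eq_zero hzeroA, add_zero, ← Finset.range_eq_Ico]
    have habs : |wind n K gA| < (n:ℤ) := by
      have h1 : |∑ i ∈ Finset.range N, deg n (gA i) (gA (i+1))| ≤ (N:ℤ) := by
        calc |∑ i ∈ Finset.range N, deg n (gA i) (gA (i+1))|
            ≤ ∑ i ∈ Finset.range N, |deg n (gA i) (gA (i+1))| :=
              Finset.abs_sum_le_sum_abs _ _
          _ ≤ ∑ _i ∈ Finset.range N, 1 := Finset.sum_le_sum (fun i _ => deg_abs n _ _)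
          _ = (N:ℤ) := by simp
      rw [hsplitA]
      have : (N:ℤ) < (n:ℤ) := by exact_mod_cast hnN
      linarith
    have hA0 : wind n K gA = 0 := int_eq_zero_of_dvd hdvd habs
    -- wind gB = n
    have hBn : wind n K gB = (n:ℤ) := by
      have h1 : ∀ i ∈ Finset.range n, deg n (gB i) (gB (i+1)) = 1 := by
        intro i hi
        have hin := Finset.mem_range.mp hi
        have e : gB (i+1) = gB i + 1 := by
          show ((min (i+1) n : ℕ) : ZMod n) = ((min i n : ℕ) : ZMod n) + 1
          rw [min_eq_left (by omega), min_eq_left (by omega)]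
          push_cast; ring
        rw [e, deg_add_one hn5]
      have h2 : ∀ i ∈ Finset.Ico n K, deg n (gB i) (gB (i+1)) = 0 := by
        intro i hi
        have hin := (Finset.mem_Ico.mp hi).1
        have e : gB i = gB (i+1) := by
          show ((min i n : ℕ) : ZMod n) = ((min (i+1) n : ℕ) : ZMod n)
          congr 1; omega
        rw [e, deg_self]
      rw [wind, Finset.range_eq_Ico,
        ← Finset.sum_Ico_consecutive (fun i => deg n (gB i) (gB (i+1))) (Nat.zero_le n) hnK,
        Finset.sum_eq_zero h2, add_zero, ← Finset.range_eq_Ico,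
        Finset.sum_congr rfl h1]
      simp
    rw [hA0, hBn] at hinv
    have : n = 0 := by exact_mod_cast hinv.symm
    omega
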